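/- Let λ be a partition with at most n parts, set α_i = λ_i − i + 1, let 0 ≤ k ≤ n, and let Y = y_1+⋯+y_m be an auxiliary alphabet of independent variables. Then R(X_k, X_k^c)·S_λ[Y+X] = det(M), where M is the n×n matrix whose entry in row i and column j is S_{α_i+n−k−1+j}[Y+X_k] for 1 ≤ j ≤ k, and S_{α_i+j−1}[Y+X_k^c] for k+1 ≤ j ≤ n. -/

import Mathlib

open MvPolynomial Finset

set_option synthInstance.maxHeartbeats 1000000
set_option maxHeartbeats 1000000

noncomputable section

/-- The base field `ℚ(q,t)`. -/
abbrev Fqt : Type := FractionRing (MvPolynomial (Fin 2) ℚ)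

/-- The element `q` of `ℚ(q,t)`. -/
def qF : Fqt := algebraMap (MvPolynomial (Fin 2) ℚ) Fqt (X 0)

/-- The element `t` of `ℚ(q,t)`. -/
def tF : Fqt := algebraMap (MvPolynomial (Fin 2) ℚ) Fqt (X 1)

lemma qF_ne_zero : qF ≠ 0 := by
  have h : Function.Injective (algebraMap (MvPolynomial (Fin 2) ℚ) Fqt) :=
    IsFractionRing.injective _ _
  intro hq
  exact MvPolynomial.X_ne_zero (R := ℚ) (0 : Fin 2) (h (by rw [map_zero]; exact hq))

/-- Polynomials in `N` variables `x_1, …, x_N` over `ℚ(q,t)`. -/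
abbrev Rg (N : ℕ) := MvPolynomial (Fin N) Fqt

/-- The field of rational functions in `x_1, …, x_N` over `ℚ(q,t)`. -/
abbrev Kg (N : ℕ) := FractionRing (Rg N)

/-- The variable `x_i` (1-based indexing), as an element of `Kg N`. -/
def xv (N i : ℕ) : Kg N :=
  if h : 1 ≤ i ∧ i ≤ N then algebraMap (Rg N) (Kg N) (X ⟨i - 1, by omega⟩) else 0

/-- A scalar from `ℚ(q,t)` viewed inside `Kg N`. -/
def cK (N : ℕ) (c : Fqt) : Kg N := algebraMap (Rg N) (Kg N) (C c)

/-- The element `q` of `Kg N`. -/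
def qK (N : ℕ) : Kg N := cK N qF

/-- The element `t` of `Kg N`. -/
def tK (N : ℕ) : Kg N := cK N tF

/-- The field automorphism of `Kg N` exchanging two variables. -/
def swapK (N : ℕ) (a b : Fin N) : Kg N ≃+* Kg N :=
  IsFractionRing.ringEquivOfRingEquiv
    (AlgEquiv.toRingEquiv (renameEquiv Fqt (Equiv.swap a b)))

/-- `swapv N a b` exchanges the variables `x_a` and `x_b` (1-based). -/
def swapv (N a b : ℕ) (f : Kg N) : Kg N :=
  if h : 1 ≤ a ∧ a ≤ N ∧ 1 ≤ b ∧ b ≤ N then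
    swapK N ⟨a - 1, by omega⟩ ⟨b - 1, by omega⟩ f else f

/-- The divided difference `∂_i` (1-based): `∂_i f = (f - σ_i f)/(x_i - x_{i+1})`. -/
def dd (N i : ℕ) (f : Kg N) : Kg N :=
  if 1 ≤ i ∧ i + 1 ≤ N then (f - swapv N i (i + 1) f) / (xv N i - xv N (i + 1)) else 0

/-- The algebra endomorphism of `Rg N` scaling the variable `l` by the scalar `c`. -/
def scaleHom (N : ℕ) (l : Fin N) (c : Fqt) : Rg N →ₐ[Fqt] Rg N :=
  aeval (fun i => if i = l then C c * X i else X i)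

lemma scaleHom_comp (N : ℕ) (l : Fin N) (c : Fqt) (hc : c ≠ 0) :
    (scaleHom N l c).comp (scaleHom N l c⁻¹) = AlgHom.id Fqt (Rg N) := by
  apply algHom_ext
  intro i
  by_cases h : i = l
  · subst h
    simp only [scaleHom, AlgHom.coe_comp, Function.comp_apply, aeval_X, if_pos,
      AlgHom.coe_id, id_eq, map_mul, aeval_C, algebraMap_eq, if_true]
    rw [← mul_assoc, ← C_mul, inv_mul_cancel₀ hc, C_1, one_mul]
  · simp [scaleHom, h]

/-- The algebra automorphism of `Rg N` scaling the variable `l` by a nonzero scalar `c`. -/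
def scaleEquiv (N : ℕ) (l : Fin N) (c : Fqt) (hc : c ≠ 0) : Rg N ≃ₐ[Fqt] Rg N :=
  AlgEquiv.ofAlgHom (scaleHom N l c) (scaleHom N l c⁻¹)
    (scaleHom_comp N l c hc)
    (by simpa [inv_inv] using scaleHom_comp N l c⁻¹ (inv_ne_zero hc))

/-- The field automorphism `Θ_l` of `Kg N`, substituting `x_l ↦ q·x_l`. -/
def thetaK (N : ℕ) (l : Fin N) : Kg N ≃+* Kg N :=
  IsFractionRing.ringEquivOfRingEquiv
    (AlgEquiv.toRingEquiv (scaleEquiv N l qF qF_ne_zero))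

/-- `Θ_l` with 1-based indexing: substitutes `x_l ↦ q x_l`. -/
def thetav (N l : ℕ) (f : Kg N) : Kg N :=
  if h : 1 ≤ l ∧ l ≤ N then thetaK N ⟨l - 1, by omega⟩ f else f

/-- The list (alphabet) `x_a, x_{a+1}, …, x_b`. -/
def XL (N a b : ℕ) : List (Kg N) := (List.range' a (b + 1 - a)).map (xv N)

/-- Scaling an alphabet by a constant. -/
def scaleL {A : Type*} [Mul A] (c : A) (L : List A) : List A := L.map (c * ·)

/-- Complete homogeneous function `h_j` of a (listed) alphabet. -/
def hfun {A : Type*} [CommRing A] : List A → ℕ → A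
  | _, 0 => 1
  | [], _ + 1 => 0
  | a :: l, j + 1 => hfun l (j + 1) + a * hfun (a :: l) j
  termination_by l j => (l.length, j)

/-- Elementary symmetric function `e_j` of a (listed) alphabet. -/
def efun {A : Type*} [CommRing A] : List A → ℕ → A
  | _, 0 => 1
  | [], _ + 1 => 0
  | a :: l, j + 1 => efun l (j + 1) + a * efun l j

/-- `S_j[P − M]`, the complete function of degree `j ∈ ℤ` of the difference of
two alphabets: `S_j[P−M] = Σ_{a+b=j} h_a[P]·(−1)^b e_b[M]`, and `0` for `j < 0`. -/
def SJ {A : Type*} [CommRing A] (P M : List A) (j : ℤ) : A :=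
  if 0 ≤ j then
    ∑ p ∈ Finset.range (j.toNat + 1), hfun P (j.toNat - p) * (-1 : A) ^ p * efun M p
  else 0

/-- `e_m[L]` with integer index (`0` for `m < 0`). -/
def EJ {A : Type*} [CommRing A] (L : List A) (m : ℤ) : A :=
  if 0 ≤ m then efun L m.toNat else 0

/-- The Jacobi–Trudi determinant: the Schur function `S_λ[P−M]` for a partition
given as a vector `lam : Fin n → ℕ`. -/
def schurJT {A : Type*} [CommRing A] (n : ℕ) (lam : Fin n → ℕ) (P M : List A) : A :=
  (Matrix.of fun i j : Fin n => SJ P M ((lam i : ℤ) - (i : ℕ) + (j : ℕ))).det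

/-- Skew Schur function `S_{α/η}[P−M]` for integer vectors `α, η` of length `k`. -/
def schurVec {A : Type*} [CommRing A] (k : ℕ) (α η : Fin k → ℤ) (P M : List A) : A :=
  (Matrix.of fun i j : Fin k => SJ P M (α i - (i : ℕ) + (j : ℕ) - η j)).det

/-- Power sum `p_i = x_1^i + ⋯ + x_N^i`. -/
def pK (N i : ℕ) : Kg N := ∑ l ∈ Finset.Icc 1 N, xv N l ^ i

/-- The modified complete functions `g_j = S_j[X(t−1)/(q−1)]`, defined through the
recurrence `j·g_j = Σ_{i=1}^{j} ((t^i−1)/(q^i−1)) p_i g_{j−i}`, `g_0 = 1`. -/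
def gK (N : ℕ) : ℕ → Kg N
  | 0 => 1
  | j + 1 =>
    ((j : Kg N) + 1)⁻¹ *
      ∑ i ∈ (Finset.Icc 1 (j + 1)).attach,
        ((tK N ^ (i : ℕ) - 1) / (qK N ^ (i : ℕ) - 1)) * pK N (i : ℕ) * gK N (j + 1 - (i : ℕ))
  termination_by j => j
  decreasing_by
    have := Finset.mem_Icc.mp i.2
    omega

/-- `g_m` with integer index (`0` for `m < 0`). -/
def gz (N : ℕ) (m : ℤ) : Kg N := if 0 ≤ m then gK N m.toNat else 0

/-- The modified Schur function `S_λ[X^{tq}]` as a `k×k` Jacobi–Trudi determinant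
in the `g_j`'s, for a partition `lam` with at most `k` parts. -/
def schurG (N k : ℕ) (lam : Fin k → ℕ) : Kg N :=
  (Matrix.of fun i j : Fin k => gz N ((lam i : ℤ) - (i : ℕ) + (j : ℕ))).det

/-- `∂_b ∘ ⋯ ∘ ∂_{a+1} ∘ ∂_a` (i.e. `∂_a` applied first). -/
def ddUp (N a b : ℕ) (f : Kg N) : Kg N :=
  (List.range' a (b + 1 - a)).foldl (fun g i => dd N i g) f

/-- `∂_a ∘ ∂_{a+1} ∘ ⋯ ∘ ∂_b` (i.e. `∂_b` applied first). -/
def ddDown (N a b : ℕ) (f : Kg N) : Kg N :=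
  (List.range' a (b + 1 - a)).reverse.foldl (fun g i => dd N i g) f

/-- `∂_{(k|n−k)} = (∂_{n−k}⋯∂_1)(∂_{n−k+1}⋯∂_2)⋯(∂_{n−1}⋯∂_k)`. -/
def ddSyl (N n k : ℕ) (f : Kg N) : Kg N :=
  (List.range k).foldl (fun g j => ddUp N (k - j) (n - 1 - j) g) f

/-- `∂_{ω(k)} = (∂_{k−1})(∂_{k−2}∂_{k−1})⋯(∂_1⋯∂_{k−1})`, the divided difference
of the longest permutation of `S_k`. -/
def ddOmega (N k : ℕ) (f : Kg N) : Kg N :=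
  (List.range (k - 1)).foldl (fun g j => ddDown N (j + 1) (k - 1) g) f

/-- The resultant `R(P,Q) = Π_{a∈P, b∈Q} (a−b)` of two (listed) alphabets. -/
def resL {A : Type*} [CommRing A] (P Q : List A) : A :=
  (P.map (fun a => (Q.map (fun b => a - b)).prod)).prod

/-- `χ^{(k)}_{(1|n−k)} f = ∂_{n−1}⋯∂_k ( R(x_k, X_k^c/t) · f )`. -/
def chi1 (N n k : ℕ) (f : Kg N) : Kg N :=
  ddUp N k (n - 1) (resL [xv N k] (scaleL (tK N)⁻¹ (XL N (k + 1) n)) * f)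

/-- `χ_{(k|n−k)} f = ∂_{(k|n−k)} ( R(X_k, X_k^c/t) · f )`. -/
def chiSyl (N n k : ℕ) (f : Kg N) : Kg N :=
  ddSyl N n k (resL (XL N 1 k) (scaleL (tK N)⁻¹ (XL N (k + 1) n)) * f)

/-- `χ_{ω(k)} f = ∂_{ω(k)} ( Π_{1≤i<j≤k} (x_i − x_j/t) · f )`. -/
def chiOmega (N k : ℕ) (f : Kg N) : Kg N :=
  ddOmega N k
    ((∏ i ∈ Finset.Icc 1 k, ∏ j ∈ Finset.Ioc i k, (xv N i - (tK N)⁻¹ * xv N j)) * f)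

/-- `Θ_{i_k}⋯Θ_{i_1}` for a set `I = {i_1 < ⋯ < i_k}` (smallest index applied first). -/
def thetaSet (N : ℕ) (I : Finset ℕ) (f : Kg N) : Kg N :=
  (I.sort (· ≤ ·)).foldl (fun g l => thetav N l g) f

/-- The Macdonald operator `M_l` in the variables `{x_i : i ∈ I}`:
`M_l^{(I)} = t^{l(l−1)/2} Σ_{J⊆I, |J|=l} R(tX_J, X_I∖X_J) Θ_J`. -/
def MacOp (N : ℕ) (I : Finset ℕ) (l : ℕ) (f : Kg N) : Kg N :=
  tK N ^ (l * (l - 1) / 2) *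
    ∑ J ∈ I.powersetCard l,
      (∏ a ∈ J, ∏ b ∈ I \ J, (tK N * xv N a - xv N b)) * thetaSet N J f

/-- The creation operator
`B_k^{(n)} = Σ_{|I|=k} Σ_{l=0}^{k} (−t)^l x^I (R(X_I,X_I^c/t)/R(X_I,X_I^c)) M_l^{(I)}`. -/
def BOp (N n k : ℕ) (f : Kg N) : Kg N :=
  ∑ I ∈ (Finset.Icc 1 n).powersetCard k, ∑ l ∈ Finset.range (k + 1),
    (-(tK N)) ^ l * (∏ i ∈ I, xv N i) *
      ((∏ a ∈ I, ∏ b ∈ Finset.Icc 1 n \ I, (xv N a - (tK N)⁻¹ * xv N b)) /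
        (∏ a ∈ I, ∏ b ∈ Finset.Icc 1 n \ I, (xv N a - xv N b))) *
      MacOp N I l f

/-- `ε(μ,α)`: the sign of the unique permutation `σ` with
`α_i = μ_{σ(i)} − σ(i) + i` for all `i`, and `0` if no such `σ` exists. -/
def eps (n : ℕ) (μ α : Fin n → ℕ) : ℤ :=
  if h : ∃ σ : Equiv.Perm (Fin n),
      ∀ i, (α i : ℤ) = (μ (σ i) : ℤ) - ((σ i : ℕ) : ℤ) + (i : ℕ) then
    Equiv.Perm.sign h.choose
  else 0

/-- `[|α|] = q^{α_1} t^{n−1} + q^{α_2} t^{n−2} + ⋯ + q^{α_n}`. -/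
def anorm (N n : ℕ) (α : Fin n → ℕ) : Kg N :=
  ∑ i : Fin n, qK N ^ (α i) * tK N ^ (n - 1 - (i : ℕ))

/-- `[|α|]_{t,q}`, i.e. `anorm` with `q` and `t` interchanged. -/
def anormT (N n : ℕ) (α : Fin n → ℕ) : Kg N :=
  ∑ i : Fin n, tK N ^ (α i) * qK N ^ (n - 1 - (i : ℕ))

/-- The finite set of all distinct rearrangements of a vector `ν ∈ ℕ^n`. -/
def permsOf (n : ℕ) (ν : Fin n → ℕ) : Finset (Fin n → ℕ) :=
  Finset.image (fun σ : Equiv.Perm (Fin n) => ν ∘ σ) Finset.univ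

/-- `[λ]_{μν}(q,t) = Σ_α ε(μ,α)·([|λ|] − [|α|])`, `α` ranging over distinct
rearrangements of `ν`. -/
def brackQT (N n : ℕ) (lam μ ν : Fin n → ℕ) : Kg N :=
  ∑ α ∈ permsOf n ν, (eps n μ α : Kg N) * (anorm N n lam - anorm N n α)

/-- `[λ]_{μν}(t,q)`: the same with `q` and `t` interchanged. -/
def brackTQ (N n : ℕ) (lam μ ν : Fin n → ℕ) : Kg N :=
  ∑ α ∈ permsOf n ν, (eps n μ α : Kg N) * (anormT N n lam - anormT N n α)

/-- The conjugate of a partition, as a vector of prescribed length `b`. -/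
def conjTo (a b : ℕ) (lam : Fin a → ℕ) : Fin b → ℕ :=
  fun j => (Finset.univ.filter (fun i : Fin a => (j : ℕ) + 1 ≤ lam i)).card

/-- Dominance order: `dominatedBy n a b` means `a ≤ b`, i.e.
`a_1 + ⋯ + a_i ≤ b_1 + ⋯ + b_i` for all `i`. -/
def dominatedBy (n : ℕ) (a b : Fin n → ℕ) : Prop :=
  ∀ p : Fin n, ∑ i ∈ Finset.Iic p, a i ≤ ∑ i ∈ Finset.Iic p, b i

/-- The Schur polynomial `S_μ[X_n]` inside `Kg N` (Jacobi–Trudi determinant in the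
complete functions of `x_1, …, x_n`). -/
def schurX (N n : ℕ) (μ : Fin n → ℕ) : Kg N := schurJT n μ (XL N 1 n) []

/-- The monomial symmetric polynomial `m_μ[X_n]` inside `Kg N`. -/
def msym (N n : ℕ) (μ : Fin n → ℕ) : Kg N :=
  ∑ α ∈ permsOf n μ, ∏ i : Fin n, xv N ((i : ℕ) + 1) ^ α i

/-- `t`-factorial `k_t! = t^{−k(k−1)/2} (t)_k/(1−t)^k`. -/
def ktfact (N k : ℕ) : Kg N :=
  tK N ^ (-((k * (k - 1) / 2 : ℕ) : ℤ)) *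
    (∏ i ∈ Finset.Icc 1 k, (1 - tK N ^ i)) / (1 - tK N) ^ k

/-- `Ω_k = σ_1 σ_2 ⋯ σ_{k−1} Θ_k`. -/
def omegaOp (N k : ℕ) (f : Kg N) : Kg N :=
  (List.range (k - 1)).foldl (fun g j => swapv N (k - 1 - j) (k - j) g) (thetav N k f)

/-- `(1−tΩ_k)(1−t²Ω_k)⋯(1−t^kΩ_k)`, composed in the order written
(the factor `(1−t^kΩ_k)` applied first). -/
def creationProd (N k : ℕ) (f : Kg N) : Kg N :=
  (List.range k).foldl (fun g j => g - tK N ^ (k - j) * omegaOp N k g) f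

/-- The exponent vector `(0,…,0,α_1,…,α_n) ∈ ℕ^{2n}` read at (1-based) position `i`. -/
def abar (n : ℕ) (α : Fin n → ℕ) (i : ℕ) : ℕ :=
  if h : n + 1 ≤ i ∧ i ≤ 2 * n then α ⟨i - n - 1, by omega⟩ else 0

/-- `x̄^{ρ−(0,…,0,α_1,…,α_n)} = Π_{i=1}^{2n} (−x_i)^{(i−1) − (0,…,0,α)_i}`. -/
def xbar (n : ℕ) (α : Fin n → ℕ) : Kg (2 * n) :=
  ∏ i ∈ Finset.Icc 1 (2 * n), (-(xv (2 * n) i)) ^ (i - 1 - abar n α i)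

/-- `⟨f⟩_{κν} = Σ_α ∂_ω( x̄^{ρ−(0,…,0,α)} f )·([|κ|]_{t,q} − [|α|]_{t,q})`,
`α` over distinct rearrangements of `ν`. -/
def brackF (n : ℕ) (f : Kg (2 * n)) (κ ν : Fin n → ℕ) : Kg (2 * n) :=
  ∑ α ∈ permsOf n ν,
    ddOmega (2 * n) (2 * n) (xbar n α * f) * (anormT (2 * n) n κ - anormT (2 * n) n α)

/-- The creation operator in `k` variables, `B_k^{(k)} = Σ_{l=0}^k (−t)^l x_1⋯x_k M_l^{(k)}`. -/
def BOpSelf (N k : ℕ) (f : Kg N) : Kg N :=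
  ∑ l ∈ Finset.range (k + 1),
    (-(tK N)) ^ l * (∏ i ∈ Finset.Icc 1 k, xv N i) * MacOp N (Finset.Icc 1 k) l f


section PS
variable {R : Type*} [CommRing R]

lemma hfun_nil (j : ℕ) : hfun ([] : List R) j = if j = 0 then 1 else 0 := by
  cases j <;> simp [hfun]

lemma efun_nil (j : ℕ) : efun ([] : List R) j = if j = 0 then 1 else 0 := by
  cases j <;> simp [efun]

lemma efun_zero (l : List R) : efun l 0 = 1 := by cases l <;> rfl

lemma hfun_zero (l : List R) : hfun l 0 = 1 := by cases l <;> simp [hfun]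

lemma efun_eq_zero_of_length_lt (l : List R) : ∀ s, l.length < s → efun l s = 0 := by
  induction l with
  | nil => intro s hs; cases s with
    | zero => omega
    | succ t => simp [efun]
  | cons a l ih =>
    intro s hs
    cases s with
    | zero => simp at hs
    | succ t =>
      simp only [List.length_cons] at hs
      rw [efun, ih _ (by omega), ih _ (by omega)]
      ring

/-- generating series of complete functions -/
def Hs (l : List R) : PowerSeries R := PowerSeries.mk (hfun l)

/-- generating series of signed elementary functions -/
def Es (l : List R) : PowerSeries R := PowerSeries.mk (fun s => (-1 : R) ^ s * efun l s)

lemma Hs_nil : Hs ([] : List R) = 1 := by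
  ext n
  cases n <;> simp [Hs, hfun_nil, PowerSeries.coeff_one]

lemma one_sub_mul_Hs_cons (a : R) (l : List R) :
    (1 - PowerSeries.C a * PowerSeries.X) * Hs (a :: l) = Hs l := by
  ext n
  rw [sub_mul, one_mul, map_sub, mul_assoc, PowerSeries.coeff_C_mul]
  cases n with
  | zero => simp [Hs, PowerSeries.coeff_zero_X_mul, hfun]
  | succ t =>
    rw [PowerSeries.coeff_succ_X_mul]
    simp only [Hs, PowerSeries.coeff_mk]
    rw [hfun]
    ring

lemma Es_cons (a : R) (l : List R) :
    Es (a :: l) = (1 - PowerSeries.C a * PowerSeries.X) * Es l := by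
  ext n
  rw [sub_mul, one_mul, map_sub, mul_assoc, PowerSeries.coeff_C_mul]
  cases n with
  | zero => simp [Es, PowerSeries.coeff_zero_X_mul, efun]
  | succ t =>
    rw [PowerSeries.coeff_succ_X_mul]
    simp only [Es, PowerSeries.coeff_mk]
    rw [efun]
    ring

lemma Es_nil : Es ([] : List R) = 1 := by
  ext n
  cases n <;> simp [Es, efun_nil, PowerSeries.coeff_one]

lemma Es_mul_Hs (l : List R) : Es l * Hs l = 1 := by
  induction l with
  | nil => rw [Es_nil, Hs_nil, one_mul]
  | cons a l ih =>
    rw [Es_cons, mul_assoc, mul_comm (Es l), ← mul_assoc, one_sub_mul_Hs_cons,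
      mul_comm, ih]

lemma Hs_append (P Q : List R) : Hs (P ++ Q) = Hs P * Hs Q := by
  induction P with
  | nil => rw [List.nil_append, Hs_nil, one_mul]
  | cons a P ih =>
    have h1 : (1 - PowerSeries.C a * PowerSeries.X) * Hs ((a :: P) ++ Q) = Hs P * Hs Q := by
      rw [List.cons_append, one_sub_mul_Hs_cons, ih]
    have h2 : (1 - PowerSeries.C a * PowerSeries.X) * (Hs (a :: P) * Hs Q) = Hs P * Hs Q := by
      rw [← mul_assoc, one_sub_mul_Hs_cons]
    have hu : Hs [a] * (1 - PowerSeries.C a * PowerSeries.X) = 1 := by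
      rw [mul_comm, one_sub_mul_Hs_cons (l := []), Hs_nil]
    calc Hs ((a :: P) ++ Q) = Hs [a] * ((1 - PowerSeries.C a * PowerSeries.X) * Hs ((a :: P) ++ Q)) := by
          rw [← mul_assoc, hu, one_mul]
      _ = Hs [a] * ((1 - PowerSeries.C a * PowerSeries.X) * (Hs (a :: P) * Hs Q)) := by rw [h1, h2]
      _ = Hs (a :: P) * Hs Q := by rw [← mul_assoc, hu, one_mul]

lemma Es_mul_Hs' (A B C : List R) (hC : Hs C = Hs A * Hs B) : Es B * Hs C = Hs A := by
  rw [hC, mul_comm (Hs A), ← mul_assoc, Es_mul_Hs, one_mul]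

end PS

section Sums
variable {R : Type*} [CommRing R]

/-- `h` with integer index. -/
def hzz (l : List R) (j : ℤ) : R := if 0 ≤ j then hfun l j.toNat else 0

/-- signed `e` with integer index. -/
def ezz (l : List R) (j : ℤ) : R := if 0 ≤ j then (-1 : R) ^ j.toNat * efun l j.toNat else 0

lemma SJ_nil (P : List R) (j : ℤ) : SJ P ([] : List R) j = hzz P j := by
  unfold SJ hzz
  by_cases h : 0 ≤ j
  · rw [if_pos h, if_pos h, Finset.sum_eq_single 0]
    · simp [efun]
    · intro b _ hb
      rw [efun_nil, if_neg hb, mul_zero]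
    · intro h0; exact absurd (Finset.mem_range.mpr (by omega)) h0
  · rw [if_neg h, if_neg h]

lemma hzz_coeff (l : List R) (r : ℕ) : hzz l (r : ℤ) = PowerSeries.coeff r (Hs l) := by
  simp [hzz, Hs]

lemma key_sum (A B C : List R) (hC : Hs C = Hs A * Hs B) (α : ℤ) (c n' : ℕ)
    (hB : B.length ≤ c) (hc : c < n') :
    ∑ p ∈ Finset.range n', hzz C (α + p) * ezz B ((c : ℤ) - p) = hzz A (α + c) := by
  -- restrict to range (c+1)
  rw [← Finset.sum_subset (Finset.range_subset_range.mpr (by omega : c + 1 ≤ n'))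
      (by intro p _ hp
          rw [Finset.mem_range, not_lt] at hp
          rw [ezz, if_neg (by omega), mul_zero])]
  -- reflect
  rw [← Finset.sum_range_reflect]
  have hre : ∀ s ∈ Finset.range (c + 1),
      hzz C (α + (c + 1 - 1 - s : ℕ)) * ezz B ((c : ℤ) - (c + 1 - 1 - s : ℕ))
        = ezz B s * hzz C (α + c - s) := by
    intro s hs
    rw [Finset.mem_range] at hs
    have h1 : ((c + 1 - 1 - s : ℕ) : ℤ) = (c : ℤ) - s := by omega
    have h2 : (c : ℤ) - ((c : ℤ) - s) = s := by ring
    rw [h1, h2, ← add_sub_assoc, mul_comm]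
  rw [Finset.sum_congr rfl hre]
  by_cases hα : 0 ≤ α + c
  · -- main case
    set r := (α + c).toNat with hr
    have hrc : α + c = (r : ℤ) := by omega
    have target : PowerSeries.coeff r (Es B * Hs C) = PowerSeries.coeff r (Hs A) := by
      rw [Es_mul_Hs' A B C hC]
    rw [PowerSeries.coeff_mul, Finset.Nat.sum_antidiagonal_eq_sum_range_succ_mk] at target
    rw [hrc, hzz_coeff, ← target]
    rw [← Finset.sum_subset (Finset.range_subset_range.mpr (by omega : min c r + 1 ≤ c + 1))
        (by intro s hs1 hs2
            rw [Finset.mem_range] at hs1 hs2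
            have h0 : hzz C ((r : ℤ) - s) = 0 := by rw [hzz, if_neg (by omega)]
            rw [h0, mul_zero]),
      ← Finset.sum_subset (Finset.range_subset_range.mpr (by omega : min c r + 1 ≤ r.succ))
        (by intro s hs1 hs2
            rw [Finset.mem_range] at hs1 hs2
            simp only [Es, PowerSeries.coeff_mk]
            rw [efun_eq_zero_of_length_lt B s (by omega), mul_zero, zero_mul])]
    apply Finset.sum_congr rfl
    intro s hs
    rw [Finset.mem_range] at hs
    simp only [Es, Hs, PowerSeries.coeff_mk]
    rw [ezz, if_pos (by omega : (0:ℤ) ≤ (s:ℤ)), hzz, if_pos (by omega)]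
    congr 2 <;> omega
  · -- α + c < 0 : everything vanishes
    rw [hzz, if_neg hα]
    apply Finset.sum_eq_zero
    intro s _
    have h0 : hzz C (α + c - s) = 0 := by rw [hzz, if_neg (by omega)]
    rw [h0, mul_zero]

end Sums

section Poly
variable {R : Type*} [CommRing R]

lemma prod_sub_eq_sum (B : List R) (x : R) :
    (B.map (fun b => x - b)).prod
      = ∑ s ∈ Finset.range (B.length + 1), (-1 : R) ^ s * efun B s * x ^ (B.length - s) := by
  induction B with
  | nil => simp [efun]
  | cons b B ih =>
    rw [List.map_cons, List.prod_cons, ih]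
    set L := B.length with hL
    have hsplit : ∀ s ∈ Finset.range (L + 1 + 1),
        (-1 : R) ^ s * efun (b :: B) s * x ^ (L + 1 - s)
          = (-1 : R) ^ s * efun B s * x ^ (L + 1 - s)
            + (-1 : R) ^ s * (b * (if s = 0 then 0 else efun B (s - 1))) * x ^ (L + 1 - s) := by
      intro s _
      cases s with
      | zero => simp [efun_zero]
      | succ t => rw [if_neg (Nat.succ_ne_zero t), efun]; push_cast; ring
    rw [List.length_cons, ← hL, Finset.sum_congr rfl hsplit, Finset.sum_add_distrib]
    have e1 : ∑ s ∈ Finset.range (L + 1 + 1), (-1 : R) ^ s * efun B s * x ^ (L + 1 - s)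
        = x * ∑ s ∈ Finset.range (L + 1), (-1 : R) ^ s * efun B s * x ^ (L - s) := by
      rw [Finset.sum_range_succ, efun_eq_zero_of_length_lt B (L + 1) (by omega),
        mul_zero, zero_mul, add_zero, Finset.mul_sum]
      apply Finset.sum_congr rfl
      intro s hs
      rw [Finset.mem_range] at hs
      have : L + 1 - s = (L - s) + 1 := by omega
      rw [this, pow_succ]
      ring
    have e2 : ∑ s ∈ Finset.range (L + 1 + 1),
        (-1 : R) ^ s * (b * (if s = 0 then 0 else efun B (s - 1))) * x ^ (L + 1 - s)
        = -b * ∑ s ∈ Finset.range (L + 1), (-1 : R) ^ s * efun B s * x ^ (L - s) := by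
      rw [Finset.sum_range_succ', Finset.mul_sum]
      simp only [if_neg (Nat.succ_ne_zero _), Nat.succ_sub_succ, Nat.sub_zero, ite_true,
        mul_zero, zero_mul, add_zero, pow_zero, one_mul]
      apply Finset.sum_congr rfl
      intro s _
      rw [pow_succ]
      ring
    rw [e1, e2]
    ring

lemma sum_pow_ezz (B : List R) (x : R) (c n' : ℕ) (hB : B.length ≤ c) (hc : c < n') :
    ∑ p ∈ Finset.range n', x ^ p * ezz B ((c : ℤ) - p)
      = x ^ (c - B.length) * (B.map (fun b => x - b)).prod := by
  rw [← Finset.sum_subset (Finset.range_subset_range.mpr (by omega : c + 1 ≤ n'))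
      (by intro p _ hp
          rw [Finset.mem_range, not_lt] at hp
          rw [ezz, if_neg (by omega), mul_zero])]
  rw [← Finset.sum_range_reflect]
  have hre : ∀ s ∈ Finset.range (c + 1),
      x ^ (c + 1 - 1 - s) * ezz B ((c : ℤ) - (c + 1 - 1 - s : ℕ))
        = x ^ (c - s) * ((-1 : R) ^ s * efun B s) := by
    intro s hs
    rw [Finset.mem_range] at hs
    have h1 : ((c + 1 - 1 - s : ℕ) : ℤ) = (c : ℤ) - s := by omega
    have h2 : (c : ℤ) - ((c : ℤ) - s) = s := by ring
    rw [h1, h2, ezz, if_pos (by omega : (0:ℤ) ≤ (s:ℤ))]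
    norm_num
  rw [Finset.sum_congr rfl hre, prod_sub_eq_sum, Finset.mul_sum,
    ← Finset.sum_subset (Finset.range_subset_range.mpr (by omega : B.length + 1 ≤ c + 1))
      (by intro s hs1 hs2
          rw [Finset.mem_range] at hs1 hs2
          rw [efun_eq_zero_of_length_lt B s (by omega), mul_zero, mul_zero])]
  apply Finset.sum_congr rfl
  intro s hs
  rw [Finset.mem_range] at hs
  rw [show c - s = (c - B.length) + (B.length - s) from by omega, pow_add]
  ring

end Poly

section DetT

lemma prod_range'_map {K : Type*} [CommMonoid K] (f : ℕ → K) :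
    ∀ (l a : ℕ), ((List.range' a l).map f).prod = ∏ i ∈ Finset.range l, f (a + i) := by
  intro l
  induction l with
  | zero => intro a; simp
  | succ t ih =>
    intro a
    rw [List.range'_succ, List.map_cons, List.prod_cons, ih (a + 1),
      Finset.prod_range_succ', mul_comm]
    have h1 : ∀ s ∈ Finset.range t, f (a + 1 + s) = f (a + (s + 1)) :=
      fun s _ => by congr 1; omega
    rw [Finset.prod_congr rfl h1, Nat.add_zero]

lemma prod_Ioi_eq_if {K : Type*} [CommMonoid K] (q : ℕ) (f : ℕ → ℕ → K) :
    ∏ i : Fin q, ∏ j ∈ Finset.Ioi i, f (i : ℕ) (j : ℕ)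
      = ∏ i : Fin q, ∏ j : Fin q, if (i : ℕ) < (j : ℕ) then f (i : ℕ) (j : ℕ) else 1 := by
  apply Finset.prod_congr rfl
  intro i _
  rw [← Finset.prod_filter]
  congr 1
  ext j
  simp only [Finset.mem_filter, Finset.mem_univ, true_and, Finset.mem_Ioi, Fin.lt_def]

variable {K : Type*} [Field K] (n k : ℕ) (y : ℕ → K)

/-- The transition matrix. -/
def Tmat : Matrix (Fin n) (Fin n) K :=
  Matrix.of fun p j : Fin n =>
    if (j : ℕ) < k then
      ezz ((List.range' k (n - k)).map y) (((n - k + (j : ℕ) : ℕ) : ℤ) - (p : ℕ))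
    else
      ezz ((List.range k).map y) (((j : ℕ) : ℤ) - (p : ℕ))

lemma det_Tmat (hkn : k ≤ n) (hy : ∀ i j, i < j → j < n → y i ≠ y j) :
    (Tmat n k y).det = resL ((List.range k).map y) ((List.range' k (n - k)).map y) := by
  classical
  set Lk : List K := (List.range k).map y with hLk
  set Lc : List K := (List.range' k (n - k)).map y with hLc
  have hLkl : Lk.length = k := by simp [hLk]
  have hLcl : Lc.length = n - k := by simp [hLc]
  set Pc : K → K := fun z => (Lc.map (fun b => z - b)).prod with hPc
  set Pk : K → K := fun z => (Lk.map (fun b => z - b)).prod with hPk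
  set V : Matrix (Fin n) (Fin n) K := Matrix.vandermonde (fun i : Fin n => y i) with hV
  set W : Matrix (Fin n) (Fin n) K := Matrix.of (fun i j : Fin n =>
    if (j : ℕ) < k then y i ^ (j : ℕ) * Pc (y i)
    else y i ^ ((j : ℕ) - k) * Pk (y i)) with hW
  -- V * T = W
  have hVT : V * Tmat n k y = W := by
    ext i j
    rw [Matrix.mul_apply]
    simp only [hV, hW, Tmat, Matrix.vandermonde_apply, Matrix.of_apply]
    by_cases hj : (j : ℕ) < k
    · simp only [hj, if_true, ite_true]
      have := sum_pow_ezz Lc (y i) (n - k + (j : ℕ)) n (by omega) (by omega)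
      rw [Fin.sum_univ_eq_sum_range
        (fun p => y i ^ p * ezz Lc (((n - k + (j : ℕ) : ℕ) : ℤ) - p)), this, hLcl]
      congr 2
      omega
    · simp only [hj, if_false, ite_false]
      have := sum_pow_ezz Lk (y i) (j : ℕ) n (by omega) (by omega)
      rw [Fin.sum_univ_eq_sum_range
        (fun p => y i ^ p * ezz Lk (((j : ℕ) : ℤ) - p)), this, hLkl]
  -- the reindexing equivalence
  have hnk : k + (n - k) = n := by omega
  set e : Fin k ⊕ Fin (n - k) ≃ Fin n := finSumFinEquiv.trans (finCongr hnk) with he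
  have he1 : ∀ i : Fin k, ((e (Sum.inl i)) : ℕ) = (i : ℕ) := by
    intro i; simp [he]
  have he2 : ∀ j : Fin (n - k), ((e (Sum.inr j)) : ℕ) = k + (j : ℕ) := by
    intro j; simp [he]
  -- membership facts
  have hmemk : ∀ i : Fin k, (0 : K) ∈ Lk.map (fun b => y (i : ℕ) - b) := by
    intro i
    rw [List.mem_map]
    exact ⟨y (i : ℕ), by rw [hLk, List.mem_map]; exact ⟨(i : ℕ), List.mem_range.mpr i.2, rfl⟩,
      sub_self _⟩
  have hmemc : ∀ j : Fin (n - k), (0 : K) ∈ Lc.map (fun b => y (k + (j : ℕ)) - b) := by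
    intro j
    rw [List.mem_map]
    refine ⟨y (k + (j : ℕ)), ?_, sub_self _⟩
    rw [hLc, List.mem_map]
    exact ⟨k + (j : ℕ), List.mem_range'_1.mpr ⟨Nat.le_add_right _ _, by omega⟩, rfl⟩
  have hPk0 : ∀ i : Fin k, Pk (y (i : ℕ)) = 0 := by
    intro i
    simp only [hPk]
    exact List.prod_eq_zero (hmemk i)
  have hPc0 : ∀ j : Fin (n - k), Pc (y (k + (j : ℕ))) = 0 := by
    intro j
    simp only [hPc]
    exact List.prod_eq_zero (hmemc j)
  -- W as block matrix
  set A₁ : Matrix (Fin k) (Fin k) K :=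
    Matrix.of (fun i j : Fin k => y (i : ℕ) ^ (j : ℕ) * Pc (y (i : ℕ))) with hA₁
  set D₁ : Matrix (Fin (n - k)) (Fin (n - k)) K :=
    Matrix.of (fun i j : Fin (n - k) => y (k + (i : ℕ)) ^ (j : ℕ) * Pk (y (k + (i : ℕ)))) with hD₁
  have hWblock : W.submatrix e e = Matrix.fromBlocks A₁ 0 0 D₁ := by
    ext a b
    cases a with
    | inl i =>
      cases b with
      | inl j =>
        simp only [Matrix.submatrix_apply, Matrix.fromBlocks_apply₁₁, hW, hA₁,
          Matrix.of_apply, he1]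
        rw [if_pos j.2]
      | inr j =>
        simp only [Matrix.submatrix_apply, Matrix.fromBlocks_apply₁₂, hW,
          Matrix.of_apply, he1, he2, Matrix.zero_apply]
        rw [if_neg (by omega), hPk0 i, mul_zero]
    | inr i =>
      cases b with
      | inl j =>
        simp only [Matrix.submatrix_apply, Matrix.fromBlocks_apply₂₁, hW,
          Matrix.of_apply, he1, he2, Matrix.zero_apply]
        rw [if_pos j.2, hPc0 i, mul_zero]
      | inr j =>
        simp only [Matrix.submatrix_apply, Matrix.fromBlocks_apply₂₂, hW, hD₁,
          Matrix.of_apply, he2]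
        rw [if_neg (by omega)]
        congr 2
        omega
  -- determinants of the blocks
  have hA₁d : A₁ = Matrix.diagonal (fun i : Fin k => Pc (y (i : ℕ)))
      * Matrix.vandermonde (fun i : Fin k => y (i : ℕ)) := by
    ext i j
    rw [Matrix.diagonal_mul, Matrix.vandermonde_apply]
    simp only [hA₁, Matrix.of_apply]
    ring
  have hD₁d : D₁ = Matrix.diagonal (fun i : Fin (n - k) => Pk (y (k + (i : ℕ))))
      * Matrix.vandermonde (fun i : Fin (n - k) => y (k + (i : ℕ))) := by
    ext i j
    rw [Matrix.diagonal_mul, Matrix.vandermonde_apply]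
    simp only [hD₁, Matrix.of_apply]
    ring
  have hdetW : W.det = ((∏ i : Fin k, Pc (y (i : ℕ)))
        * ∏ i : Fin k, ∏ j : Fin k, if (i : ℕ) < (j : ℕ) then y (j : ℕ) - y (i : ℕ) else 1)
      * ((∏ i : Fin (n - k), Pk (y (k + (i : ℕ))))
        * ∏ i : Fin (n - k), ∏ j : Fin (n - k),
            if (i : ℕ) < (j : ℕ) then y (k + (j : ℕ)) - y (k + (i : ℕ)) else 1) := by
    rw [← Matrix.det_submatrix_equiv_self e W, hWblock, Matrix.det_fromBlocks_zero₂₁,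
      hA₁d, hD₁d, Matrix.det_mul, Matrix.det_mul, Matrix.det_diagonal, Matrix.det_diagonal,
      Matrix.det_vandermonde, Matrix.det_vandermonde,
      prod_Ioi_eq_if k (fun a b => y b - y a),
      prod_Ioi_eq_if (n - k) (fun a b => y (k + b) - y (k + a))]
  -- splitting of the Vandermonde determinant
  have hdetV : V.det
      = (∏ i : Fin k, ∏ j : Fin k, if (i : ℕ) < (j : ℕ) then y (j : ℕ) - y (i : ℕ) else 1)
      * ((∏ i : Fin k, ∏ j : Fin (n - k), (y (k + (j : ℕ)) - y (i : ℕ)))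
      * ∏ i : Fin (n - k), ∏ j : Fin (n - k),
          if (i : ℕ) < (j : ℕ) then y (k + (j : ℕ)) - y (k + (i : ℕ)) else 1) := by
    rw [hV, Matrix.det_vandermonde, prod_Ioi_eq_if n (fun a b => y b - y a)]
    rw [← Equiv.prod_comp e
      (fun a : Fin n => ∏ j : Fin n, if (a : ℕ) < (j : ℕ) then y (j : ℕ) - y (a : ℕ) else 1)]
    have hinner : ∀ a : Fin k ⊕ Fin (n - k),
        (∏ j : Fin n, if ((e a : Fin n) : ℕ) < (j : ℕ)
            then y (j : ℕ) - y ((e a : Fin n) : ℕ) else 1)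
          = ∏ b : Fin k ⊕ Fin (n - k), if ((e a : Fin n) : ℕ) < ((e b : Fin n) : ℕ)
            then y ((e b : Fin n) : ℕ) - y ((e a : Fin n) : ℕ) else 1 := by
      intro a
      rw [← Equiv.prod_comp e
        (fun j : Fin n => if ((e a : Fin n) : ℕ) < (j : ℕ)
          then y (j : ℕ) - y ((e a : Fin n) : ℕ) else 1)]
    rw [Finset.prod_congr rfl (fun a _ => hinner a), Fintype.prod_sum_type]
    have hL : ∀ a : Fin k ⊕ Fin (n - k),
        (∏ b : Fin k ⊕ Fin (n - k), if ((e a : Fin n) : ℕ) < ((e b : Fin n) : ℕ)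
            then y ((e b : Fin n) : ℕ) - y ((e a : Fin n) : ℕ) else 1)
          = (∏ b : Fin k, if ((e a : Fin n) : ℕ) < (b : ℕ)
              then y (b : ℕ) - y ((e a : Fin n) : ℕ) else 1)
            * ∏ b : Fin (n - k), if ((e a : Fin n) : ℕ) < k + (b : ℕ)
              then y (k + (b : ℕ)) - y ((e a : Fin n) : ℕ) else 1 := by
      intro a
      rw [Fintype.prod_sum_type]
      simp only [he1, he2]
    rw [Finset.prod_congr rfl (fun a _ => hL (Sum.inl a)),
      Finset.prod_congr rfl (fun a _ => hL (Sum.inr a))]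
    simp only [he1, he2]
    rw [Finset.prod_mul_distrib, Finset.prod_mul_distrib]
    have t12 : ∀ i : Fin k,
        (∏ b : Fin (n - k), if (i : ℕ) < k + (b : ℕ) then y (k + (b : ℕ)) - y (i : ℕ) else 1)
          = ∏ b : Fin (n - k), (y (k + (b : ℕ)) - y (i : ℕ)) := by
      intro i
      apply Finset.prod_congr rfl
      intro b _
      rw [if_pos (by have := i.2; omega)]
    have t21 : ∀ j : Fin (n - k),
        (∏ b : Fin k, if k + (j : ℕ) < (b : ℕ) then y (b : ℕ) - y (k + (j : ℕ)) else 1)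
          = 1 := by
      intro j
      apply Finset.prod_eq_one
      intro b _
      rw [if_neg (by have := b.2; omega)]
    have t22 : ∀ j : Fin (n - k),
        (∏ b : Fin (n - k), if k + (j : ℕ) < k + (b : ℕ)
            then y (k + (b : ℕ)) - y (k + (j : ℕ)) else 1)
          = ∏ b : Fin (n - k), if (j : ℕ) < (b : ℕ)
            then y (k + (b : ℕ)) - y (k + (j : ℕ)) else 1 := by
      intro j
      apply Finset.prod_congr rfl
      intro b _
      by_cases h : (j : ℕ) < (b : ℕ)
      · rw [if_pos (by omega), if_pos h]
      · rw [if_neg (by omega), if_neg h]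
    rw [Finset.prod_congr rfl (fun i _ => t12 i), Finset.prod_congr rfl (fun j _ => t21 j),
      Finset.prod_congr rfl (fun j _ => t22 j), Finset.prod_const_one, one_mul]
    ring
  -- nonvanishing of the Vandermonde determinant
  have hVne : V.det ≠ 0 := by
    rw [hV, Matrix.det_vandermonde]
    apply Finset.prod_ne_zero_iff.mpr
    intro i _
    apply Finset.prod_ne_zero_iff.mpr
    intro j hj
    rw [Finset.mem_Ioi] at hj
    exact sub_ne_zero.mpr (fun hc => hy (i : ℕ) (j : ℕ) hj j.2 hc.symm)
  -- the resultant
  have hres : resL Lk Lc = ∏ i : Fin k, Pc (y (i : ℕ)) := by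
    rw [resL, hLk, List.map_map,
      show (List.range k) = List.range' 0 k from List.range_eq_range',
      prod_range'_map _ k 0, Fin.prod_univ_eq_prod_range (fun a => Pc (y a)) k]
    apply Finset.prod_congr rfl
    intro i _
    simp [hPc]
  -- Pk products match the cross term
  have hPkprod : ∏ j : Fin (n - k), Pk (y (k + (j : ℕ)))
      = ∏ i : Fin k, ∏ j : Fin (n - k), (y (k + (j : ℕ)) - y (i : ℕ)) := by
    rw [Finset.prod_comm]
    apply Finset.prod_congr rfl
    intro j _
    simp only [hPk, hLk]
    rw [List.map_map,
      show (List.range k) = List.range' 0 k from List.range_eq_range',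
      prod_range'_map _ k 0,
      Fin.prod_univ_eq_prod_range (fun a => y (k + (j : ℕ)) - y a) k]
    apply Finset.prod_congr rfl
    intro i _
    simp
  -- conclude
  have hdetmul : V.det * (Tmat n k y).det = V.det * resL Lk Lc := by
    rw [← Matrix.det_mul, hVT, hdetW, hdetV, hres, hPkprod]
    ring
  exact mul_left_cancel₀ hVne hdetmul

end DetT


/-- formula 2.11: `R(X_k,X_k^c)·S_λ[Y+X]` as an `n×n` determinant,
with `Y = x_{n+1},…,x_{n+m}` the auxiliary alphabet. -/
theorem stmt4 (n m k : ℕ) (hkn : k ≤ n) (lam : Fin n → ℕ) (hlam : Antitone lam) :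
    resL (XL (n + m) 1 k) (XL (n + m) (k + 1) n) *
        schurJT n lam (XL (n + m) (n + 1) (n + m) ++ XL (n + m) 1 n) []
      = (Matrix.of fun i j : Fin n =>
          if (j : ℕ) < k then
            SJ (XL (n + m) (n + 1) (n + m) ++ XL (n + m) 1 k) []
              ((lam i : ℤ) - (i : ℕ) + ((n - k : ℕ) : ℤ) + (j : ℕ))
          else
            SJ (XL (n + m) (n + 1) (n + m) ++ XL (n + m) (k + 1) n) []
              ((lam i : ℤ) - (i : ℕ) + (j : ℕ))).det := by
  classical
  set N := n + m with hN
  set y : ℕ → Kg N := fun i => xv N (i + 1) with hy_def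
  have hy : ∀ i j, i < j → j < n → y i ≠ y j := by
    intro i j hij hj hEq
    simp only [hy_def] at hEq
    rw [xv, dif_pos (by omega : 1 ≤ i + 1 ∧ i + 1 ≤ N),
      xv, dif_pos (by omega : 1 ≤ j + 1 ∧ j + 1 ≤ N)] at hEq
    have h2 := MvPolynomial.X_injective (IsFractionRing.injective (Rg N) (Kg N) hEq)
    rw [Fin.mk.injEq] at h2
    omega
  have hXk : XL N 1 k = (List.range k).map y := by
    rw [XL, show k + 1 - 1 = k from by omega, List.range'_eq_map_range, List.map_map]
    apply List.map_congr_left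
    intro a _
    simp only [Function.comp_apply, hy_def]
    congr 1
    omega
  have hXc : XL N (k + 1) n = (List.range' k (n - k)).map y := by
    rw [XL, show n + 1 - (k + 1) = n - k from by omega, List.range'_eq_map_range,
      List.range'_eq_map_range, List.map_map, List.map_map]
    apply List.map_congr_left
    intro a _
    simp only [Function.comp_apply, hy_def]
    congr 1
    omega
  have hXall : XL N 1 n = XL N 1 k ++ XL N (k + 1) n := by
    rw [XL, XL, XL, ← List.map_append]
    congr 1
    rw [show k + 1 - 1 = k from by omega, show n + 1 - (k + 1) = n - k from by omega,
      show n + 1 - 1 = n from by omega]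
    have := List.range'_append (s := 1) (m := k) (n := n - k) (step := 1)
    simp only [one_mul, mul_one] at this
    rw [show 1 + k = k + 1 from by omega] at this
    rw [this]
    congr 1
    omega
  set Yl := XL N (n + 1) (n + m) with hYl
  set Cl := Yl ++ XL N 1 n with hCl
  set H : Matrix (Fin n) (Fin n) (Kg N) :=
    Matrix.of (fun i p : Fin n => hzz Cl ((lam i : ℤ) - (i : ℕ) + (p : ℕ))) with hH
  have hHs1 : Hs Cl = Hs (Yl ++ XL N 1 k) * Hs ((List.range' k (n - k)).map y) := by
    rw [hCl, hXall, Hs_append, Hs_append, Hs_append, ← hXc, mul_assoc]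
  have hHs2 : Hs Cl = Hs (Yl ++ XL N (k + 1) n) * Hs ((List.range k).map y) := by
    rw [hCl, hXall, Hs_append, Hs_append, Hs_append, ← hXk]
    ring
  have hMT : (Matrix.of fun i j : Fin n =>
      if (j : ℕ) < k then
        SJ (Yl ++ XL N 1 k) [] ((lam i : ℤ) - (i : ℕ) + ((n - k : ℕ) : ℤ) + (j : ℕ))
      else
        SJ (Yl ++ XL N (k + 1) n) [] ((lam i : ℤ) - (i : ℕ) + (j : ℕ)))
      = H * Tmat n k y := by
    ext i j
    rw [Matrix.mul_apply]
    simp only [Matrix.of_apply, hH, Tmat]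
    by_cases hj : (j : ℕ) < k
    · simp only [hj, if_true, ite_true]
      rw [Fin.sum_univ_eq_sum_range (fun p => hzz Cl ((lam i : ℤ) - (i : ℕ) + p)
          * ezz ((List.range' k (n - k)).map y) (((n - k + (j : ℕ) : ℕ) : ℤ) - p)) n]
      rw [key_sum (Yl ++ XL N 1 k) ((List.range' k (n - k)).map y) Cl hHs1
        ((lam i : ℤ) - (i : ℕ)) (n - k + (j : ℕ)) n (by simp) (by omega)]
      rw [SJ_nil]
      congr 1
      push_cast
      omega
    · simp only [hj, if_false, ite_false]
      rw [Fin.sum_univ_eq_sum_range (fun p => hzz Cl ((lam i : ℤ) - (i : ℕ) + p)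
          * ezz ((List.range k).map y) (((j : ℕ) : ℤ) - p)) n]
      rw [key_sum (Yl ++ XL N (k + 1) n) ((List.range k).map y) Cl hHs2
        ((lam i : ℤ) - (i : ℕ)) (j : ℕ) n (by simp; omega) (j.2)]
      rw [SJ_nil]
  have hHdet : H.det = schurJT n lam (Yl ++ XL N 1 n) [] := by
    rw [schurJT]
    congr 1
    ext i p
    simp only [hH, Matrix.of_apply, SJ_nil, hCl]
  rw [hMT, Matrix.det_mul, det_Tmat n k y hkn hy, ← hXk, ← hXc, hHdet]
  ring

end
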